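/- arXiv:1310.7103 — 3 statements merged into one kernel-verified Lean document; each statement's English description precedes it below -/
import Mathlib

section
/- For all nonnegative integers n and positive integers k, Ch_n^{(k)} = Σ_{l=0}^{n} s(n,l) E_l^{(k)}, where s(n,l) are the signed Stirling numbers of the first kind and E_l^{(k)} are the Euler numbers of order k. -/
open PowerSeries Finset

/-- Higher-order Changhee numbers of the first kind. -/
noncomputable def Ch (k n : ℕ) : ℚ := (-1/2)^n * n.factorial * ((n+k-1).choose n)

/-- Signed Stirling numbers of the first kind, via coefficients of the falling factorial. -/
noncomputable def stirling1 (n l : ℕ) : ℚ :=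
  (∏ i ∈ Finset.range n, (Polynomial.X - (i : Polynomial ℚ))).coeff l

/-- Stirling numbers of the second kind, via (e^t-1)^n = n! Σ S₂(m,n) t^m/m!. -/
noncomputable def stirling2 (m n : ℕ) : ℚ :=
  (m.factorial : ℚ) / n.factorial * PowerSeries.coeff (R := ℚ) m ((PowerSeries.exp ℚ - 1)^n)

/-- Higher-order Euler numbers, from (2/(e^t+1))^k. -/
noncomputable def EulerN (k l : ℕ) : ℚ :=
  l.factorial * PowerSeries.coeff (R := ℚ) l ((2 * (PowerSeries.exp ℚ + 1)⁻¹)^k)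

/-- Higher-order Euler polynomials, from (2/(e^t+1))^k e^{xt}. -/
noncomputable def EulerP (k : ℕ) (x : ℚ) (l : ℕ) : ℚ :=
  l.factorial * PowerSeries.coeff (R := ℚ) l
    ((2 * (PowerSeries.exp ℚ + 1)⁻¹)^k * PowerSeries.rescale x (PowerSeries.exp ℚ))

/-- Generalized binomial coefficient. -/
noncomputable def gbinom (x : ℚ) (m : ℕ) : ℚ := (∏ i ∈ Finset.range m, (x - i)) / m.factorial

/-- Binomial series (1+t)^x. -/
noncomputable def onePlusXPow (x : ℚ) : PowerSeries ℚ := PowerSeries.mk fun m => gbinom x m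

/-- Higher-order Changhee polynomials of the first kind, from (2/(2+t))^k (1+t)^x. -/
noncomputable def ChP (k : ℕ) (x : ℚ) (n : ℕ) : ℚ :=
  n.factorial * PowerSeries.coeff (R := ℚ) n
    ((2 * (2 + PowerSeries.X : PowerSeries ℚ)⁻¹)^k * onePlusXPow x)

/-- Higher-order Changhee numbers of the second kind, from (2/(2+t))^k (1+t)^k. -/
noncomputable def ChhN (k n : ℕ) : ℚ :=
  n.factorial * PowerSeries.coeff (R := ℚ) n
    ((2 * (2 + PowerSeries.X : PowerSeries ℚ)⁻¹)^k * (1 + PowerSeries.X)^k)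

/-- Higher-order Changhee polynomials of the second kind, from (2/(2+t))^k (1+t)^{x+k}. -/
noncomputable def ChP2 (k : ℕ) (x : ℚ) (n : ℕ) : ℚ :=
  n.factorial * PowerSeries.coeff (R := ℚ) n
    ((2 * (2 + PowerSeries.X : PowerSeries ℚ)⁻¹)^k * onePlusXPow (x + k))


noncomputable def Aps : PowerSeries ℚ := PowerSeries.exp ℚ - 1
noncomputable def gq (k j : ℕ) : ℚ := (-1/2)^j * ((j+k-1).choose j)

lemma constA : constantCoeff (R := ℚ) Aps = 0 := by
  simp [Aps, constantCoeff_exp]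

lemma coeff_A_pow {m j : ℕ} (h : m < j) : coeff (R := ℚ) m (Aps ^ j) = 0 := by
  have hX : (X : ℚ⟦X⟧) ∣ Aps := X_dvd_iff.2 constA
  have : (X : ℚ⟦X⟧)^j ∣ Aps ^ j := pow_dvd_pow_of_dvd hX j
  exact X_pow_dvd_iff.1 this m h

-- inverse of (2+X)^k
lemma inv_two_add_X (k : ℕ) (hk : 0 < k) :
    ((2 : ℚ⟦X⟧) + X)^k * (PowerSeries.C (R := ℚ) (((2:ℚ)^k)⁻¹) * rescale (-(1/2) : ℚ) (PowerSeries.invOneSubPow ℚ k).val) = 1 := by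
  have h0 : ((1 : ℚ⟦X⟧) - X)^k * (PowerSeries.invOneSubPow ℚ k).val = 1 := by
    have := (PowerSeries.invOneSubPow ℚ k).inv_val
    rwa [PowerSeries.invOneSubPow_inv_eq_one_sub_pow] at this
  have h1 := congrArg (rescale (-(1/2) : ℚ)) h0
  rw [map_mul, map_pow, map_sub, map_one, rescale_X] at h1
  have h2 : ((2 : ℚ⟦X⟧) + X) = PowerSeries.C (R := ℚ) 2 * (1 - PowerSeries.C (R := ℚ) (-(1/2)) * X) := by
    have : (2 : ℚ⟦X⟧) = PowerSeries.C (R := ℚ) 2 := by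
      simp [← map_ofNat (PowerSeries.C (R := ℚ)) 2]
    rw [this, mul_sub, mul_one, ← mul_assoc, ← map_mul,
      show (2:ℚ) * -(1/2) = -1 by norm_num, map_neg, map_one]
    ring
  rw [h2, mul_pow, ← map_pow]
  calc PowerSeries.C (R := ℚ) ((2:ℚ)^k) * (1 - PowerSeries.C (R := ℚ) (-(1/2)) * X)^k *
      (PowerSeries.C (R := ℚ) (((2:ℚ)^k)⁻¹) * rescale (-(1/2) : ℚ) (PowerSeries.invOneSubPow ℚ k).val)
      = (PowerSeries.C (R := ℚ) ((2:ℚ)^k) * PowerSeries.C (R := ℚ) (((2:ℚ)^k)⁻¹)) *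
        ((1 - PowerSeries.C (R := ℚ) (-(1/2)) * X)^k * rescale (-(1/2) : ℚ) (PowerSeries.invOneSubPow ℚ k).val) := by ring
    _ = 1 := by rw [h1, ← map_mul]; norm_num

noncomputable def Iinv (k : ℕ) : ℚ⟦X⟧ :=
  PowerSeries.C (R := ℚ) (((2:ℚ)^k)⁻¹) * rescale (-(1/2) : ℚ) (PowerSeries.invOneSubPow ℚ k).val

lemma coeff_Iinv (k : ℕ) (hk : 0 < k) (j : ℕ) :
    coeff (R := ℚ) j (Iinv k) = ((2:ℚ)^k)⁻¹ * gq k j := by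
  rw [Iinv, coeff_C_mul, coeff_rescale,
    PowerSeries.invOneSubPow_val_eq_mk_sub_one_add_choose_of_pos _ _ hk, coeff_mk]
  have h1 : (k - 1 + j).choose (k-1) = (j + k - 1).choose j := by
    have h2 : j + k - 1 = k - 1 + j := by omega
    rw [h2, ← Nat.choose_symm (Nat.le_add_right _ _)]
    congr 1
    omega
  rw [h1, gq]
  ring

noncomputable def SSp (k L : ℕ) : Polynomial ℚ :=
  ∑ j ∈ range (L+1), Polynomial.C (gq k j) * Polynomial.X ^ j

lemma coeff_SSp (k L j : ℕ) : (SSp k L).coeff j = if j ≤ L then gq k j else 0 := by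
  rw [SSp, Polynomial.finset_sum_coeff]
  simp only [Polynomial.coeff_C_mul, Polynomial.coeff_X_pow, mul_ite, mul_one, mul_zero]
  rw [Finset.sum_ite_eq (range (L+1)) j (fun j => gq k j)]
  simp [Nat.lt_succ_iff]

noncomputable def PPp (k L : ℕ) : Polynomial ℚ :=
  (Polynomial.C (2:ℚ) + Polynomial.X)^k * SSp k L

lemma coe_PPp (k L : ℕ) :
    (PPp k L : ℚ⟦X⟧) = ((2:ℚ⟦X⟧) + X)^k * (SSp k L : ℚ⟦X⟧) := by
  rw [PPp, Polynomial.coe_mul, Polynomial.coe_pow, Polynomial.coe_add, Polynomial.coe_C,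
    Polynomial.coe_X, ← map_ofNat (PowerSeries.C (R := ℚ)) 2]

lemma coeff_PPp (k L : ℕ) (hk : 0 < k) {p : ℕ} (hp : p ≤ L) :
    (PPp k L).coeff p = if p = 0 then (2:ℚ)^k else 0 := by
  have hD : ∀ b ≤ L, coeff (R := ℚ) b ((SSp k L : ℚ⟦X⟧) - PowerSeries.C (R := ℚ) ((2:ℚ)^k) * Iinv k) = 0 := by
    intro b hb
    rw [map_sub, coeff_C_mul, coeff_Iinv k hk, Polynomial.coeff_coe, coeff_SSp, if_pos hb]
    field_simp
    simp
  have hsplit : ((2:ℚ⟦X⟧) + X)^k * (SSp k L : ℚ⟦X⟧)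
      = PowerSeries.C (R := ℚ) ((2:ℚ)^k)
        + ((2:ℚ⟦X⟧) + X)^k * ((SSp k L : ℚ⟦X⟧) - PowerSeries.C (R := ℚ) ((2:ℚ)^k) * Iinv k) := by
    have h1 : ((2:ℚ⟦X⟧) + X)^k * Iinv k = 1 := inv_two_add_X k hk
    calc ((2:ℚ⟦X⟧) + X)^k * (SSp k L : ℚ⟦X⟧)
        = PowerSeries.C (R := ℚ) ((2:ℚ)^k) * (((2:ℚ⟦X⟧) + X)^k * Iinv k)
          + ((2:ℚ⟦X⟧) + X)^k * ((SSp k L : ℚ⟦X⟧) - PowerSeries.C (R := ℚ) ((2:ℚ)^k) * Iinv k) := by ring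
      _ = _ := by rw [h1, mul_one]
  have := congrArg (coeff (R := ℚ) p) (coe_PPp k L)
  rw [Polynomial.coeff_coe] at this
  rw [this, hsplit, map_add, PowerSeries.coeff_C, PowerSeries.coeff_mul]
  rw [Finset.sum_eq_zero, add_zero]
  intro ab hab
  rw [Finset.HasAntidiagonal.mem_antidiagonal] at hab
  rw [hD ab.2 (by omega), mul_zero]

lemma two_eq_C : (2 : ℚ⟦X⟧) = PowerSeries.C (R := ℚ) 2 := by
  simp [← map_ofNat (PowerSeries.C (R := ℚ)) 2]

lemma aeval_PPp (k L : ℕ) :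
    Polynomial.aeval Aps (PPp k L)
      = (PowerSeries.exp ℚ + 1)^k * ∑ j ∈ range (L+1), PowerSeries.C (R := ℚ) (gq k j) * Aps ^ j := by
  rw [PPp, map_mul, map_pow, map_add, Polynomial.aeval_X, Polynomial.aeval_C, SSp, map_sum]
  congr 1
  · congr 1
    have : algebraMap ℚ ℚ = RingHom.id ℚ := by ext; simp
    rw [PowerSeries.algebraMap_apply, this, RingHom.id_apply, ← two_eq_C, Aps]
    ring
  · apply Finset.sum_congr rfl
    intro j _
    rw [map_mul, map_pow, Polynomial.aeval_X, Polynomial.aeval_C, PowerSeries.algebraMap_apply]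
    have : algebraMap ℚ ℚ = RingHom.id ℚ := by ext; simp
    rw [this, RingHom.id_apply]

lemma L1 (k L : ℕ) (hk : 0 < k) {m : ℕ} (hm : m ≤ L) :
    coeff (R := ℚ) m ((PowerSeries.exp ℚ + 1)^k * ∑ j ∈ range (L+1), PowerSeries.C (R := ℚ) (gq k j) * Aps ^ j)
      = if m = 0 then (2:ℚ)^k else 0 := by
  rw [← aeval_PPp, Polynomial.aeval_eq_sum_range, map_sum]
  rw [Finset.sum_eq_single 0]
  · rw [pow_zero, coeff_smul, PowerSeries.coeff_one, smul_eq_mul]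
    have h0 : (PPp k L).coeff 0 = (2:ℚ)^k := by
      rw [coeff_PPp k L hk (Nat.zero_le L), if_pos rfl]
    rw [h0]
    split <;> simp
  · intro i _ hi
    rw [coeff_smul, smul_eq_mul]
    rcases le_or_gt i L with h | h
    · rw [coeff_PPp k L hk h, if_neg hi, zero_mul]
    · rw [coeff_A_pow (lt_of_le_of_lt hm h), mul_zero]
  · intro h
    exact absurd (Finset.mem_range.2 (Nat.succ_pos _)) h

lemma coeff_F (k : ℕ) (hk : 0 < k) (l : ℕ) :
    coeff (R := ℚ) l ((2 * (PowerSeries.exp ℚ + 1)⁻¹)^k)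
      = ∑ j ∈ range (l+1), gq k j * coeff (R := ℚ) l (Aps ^ j) := by
  set G : ℚ⟦X⟧ := PowerSeries.exp ℚ + 1 with hGdef
  have hG : constantCoeff (R := ℚ) G = 2 := by
    simp [hGdef, constantCoeff_exp]
    norm_num
  have hGk : constantCoeff (R := ℚ) (G^k) ≠ 0 := by
    rw [map_pow, hG]
    positivity
  have hinvpow : (G⁻¹)^k = (G^k)⁻¹ := by
    rw [PowerSeries.eq_inv_iff_mul_eq_one hGk, ← mul_pow,
      PowerSeries.inv_mul_cancel _ (by rw [hG]; norm_num), one_pow]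
  set SA : ℚ⟦X⟧ := ∑ j ∈ range (l+1), PowerSeries.C (R := ℚ) (gq k j) * Aps ^ j with hSA
  have h2 : (G^k)⁻¹ * (G^k * SA) = SA := by
    rw [← mul_assoc, PowerSeries.inv_mul_cancel _ hGk, one_mul]
  have h3 : coeff (R := ℚ) l SA = coeff (R := ℚ) l ((G^k)⁻¹) * (2:ℚ)^k := by
    conv_lhs => rw [← h2]
    rw [PowerSeries.coeff_mul]
    rw [Finset.sum_eq_single (l, 0)]
    · rw [L1 k l hk (Nat.zero_le l), if_pos rfl]
    · intro ab hab hne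
      rw [Finset.HasAntidiagonal.mem_antidiagonal] at hab
      rw [L1 k l hk (show ab.2 ≤ l by omega), if_neg, mul_zero]
      intro h0
      apply hne
      have : ab.1 = l := by omega
      rw [Prod.ext_iff]
      exact ⟨this, h0⟩
    · intro h
      exact absurd (Finset.HasAntidiagonal.mem_antidiagonal.2 (by omega)) h
  have h4 : (2 * G⁻¹ : ℚ⟦X⟧)^k = PowerSeries.C (R := ℚ) ((2:ℚ)^k) * (G^k)⁻¹ := by
    rw [mul_pow, hinvpow, two_eq_C, ← map_pow]
  rw [h4, coeff_C_mul]
  rw [hSA, map_sum] at h3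
  simp only [coeff_C_mul] at h3
  rw [h3, mul_comm]

lemma fact_coeff_A_pow (l j : ℕ) :
    (l.factorial : ℚ) * coeff (R := ℚ) l (Aps ^ j)
      = ∑ i ∈ range (j+1), (-1:ℚ)^(j-i) * (j.choose i) * (i:ℚ)^l := by
  have hA : Aps ^ j = ∑ i ∈ range (j+1),
      PowerSeries.C (R := ℚ) ((-1:ℚ)^(j-i) * (j.choose i)) * PowerSeries.exp ℚ ^ i := by
    rw [Aps, sub_eq_add_neg, add_pow]
    apply Finset.sum_congr rfl
    intro i _
    rw [map_mul, map_pow, map_neg, map_one, map_natCast]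
    ring
  rw [hA, map_sum, Finset.mul_sum]
  apply Finset.sum_congr rfl
  intro i _
  rw [coeff_C_mul, exp_pow_eq_rescale_exp, coeff_rescale, coeff_exp]
  have : algebraMap ℚ ℚ = RingHom.id ℚ := by ext; simp
  rw [this, RingHom.id_apply]
  have hl : (l.factorial : ℚ) ≠ 0 := Nat.cast_ne_zero.2 (Nat.factorial_ne_zero l)
  field_simp

lemma stirling1_eval (n : ℕ) (x : ℚ) :
    ∑ l ∈ range (n+1), stirling1 n l * x^l = ∏ m ∈ range n, (x - m) := by
  set p := ∏ i ∈ range n, (Polynomial.X - (i : Polynomial ℚ)) with hp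
  have hmon : ∀ i ∈ range n, (Polynomial.X - (i : Polynomial ℚ)).Monic := by
    intro i _
    rw [show ((i : Polynomial ℚ)) = Polynomial.C ((i:ℚ)) from (Polynomial.C_eq_natCast i).symm]
    exact Polynomial.monic_X_sub_C _
  have hdeg : p.natDegree = n := by
    rw [hp, Polynomial.natDegree_prod_of_monic _ _ hmon]
    have : ∀ i ∈ range n, (Polynomial.X - (i : Polynomial ℚ)).natDegree = 1 := by
      intro i _
      rw [show ((i : Polynomial ℚ)) = Polynomial.C ((i:ℚ)) from (Polynomial.C_eq_natCast i).symm]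
      exact Polynomial.natDegree_X_sub_C _
    rw [Finset.sum_congr rfl this]
    simp
  have heval := Polynomial.eval_eq_sum_range' (show p.natDegree < n+1 by omega) x
  have : p.eval x = ∏ m ∈ range n, (x - m) := by
    rw [hp, Polynomial.eval_prod]
    apply Finset.prod_congr rfl
    intro m _
    simp
  rw [← this, heval]
  rfl

lemma eval_falling_lt {n i : ℕ} (h : i < n) : ∏ m ∈ range n, ((i:ℚ) - m) = 0 :=
  Finset.prod_eq_zero (Finset.mem_range.2 h) (by simp)

lemma eval_falling_self (n : ℕ) : ∏ m ∈ range n, ((n:ℚ) - m) = (n.factorial : ℚ) := by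
  have h1 : ∀ m ∈ range n, ((n:ℚ) - m) = ((n - m : ℕ) : ℚ) := by
    intro m hm
    rw [Nat.cast_sub (le_of_lt (mem_range.1 hm))]
  rw [Finset.prod_congr rfl h1, ← Nat.cast_prod]
  congr 1
  calc ∏ m ∈ range n, (n - m) = ∏ j ∈ range n, (n - (n - 1 - j)) :=
        (Finset.prod_range_reflect (fun m => n - m) n).symm
    _ = ∏ j ∈ range n, (j + 1) := by
        apply Finset.prod_congr rfl
        intro j hj
        rw [mem_range] at hj
        omega
    _ = n.factorial := Finset.prod_range_add_one_eq_factorial n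

lemma stirlingOrth (n j : ℕ) (hj : j ≤ n) :
    ∑ l ∈ range (n+1), stirling1 n l *
        (∑ i ∈ range (j+1), (-1:ℚ)^(j-i) * (j.choose i) * (i:ℚ)^l)
      = if j = n then (n.factorial : ℚ) else 0 := by
  have hswap : ∑ l ∈ range (n+1), stirling1 n l *
        (∑ i ∈ range (j+1), (-1:ℚ)^(j-i) * (j.choose i) * (i:ℚ)^l)
      = ∑ i ∈ range (j+1), (-1:ℚ)^(j-i) * (j.choose i) *
        (∑ l ∈ range (n+1), stirling1 n l * (i:ℚ)^l) := by
    simp_rw [Finset.mul_sum]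
    rw [Finset.sum_comm]
    apply Finset.sum_congr rfl
    intro i _
    apply Finset.sum_congr rfl
    intro l _
    ring
  rw [hswap]
  have heval : ∀ i : ℕ, (∑ l ∈ range (n+1), stirling1 n l * (i:ℚ)^l)
      = ∏ m ∈ range n, ((i:ℚ) - m) := fun i => stirling1_eval n i
  rcases eq_or_lt_of_le hj with h | h
  · subst h
    rw [if_pos rfl, Finset.sum_eq_single j]
    · rw [heval j, eval_falling_self, Nat.sub_self, pow_zero, Nat.choose_self]
      norm_num
    · intro i hi hne
      rw [mem_range] at hi
      rw [heval i, eval_falling_lt (by omega), mul_zero]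
    · intro h
      exact absurd (mem_range.2 (by omega)) h
  · rw [if_neg (by omega), Finset.sum_eq_zero]
    intro i hi
    rw [mem_range] at hi
    rw [heval i, eval_falling_lt (by omega), mul_zero]

theorem changhee_aux (n : ℕ) (k : ℕ) (hk : 0 < k) :
    (-1/2 : ℚ)^n * n.factorial * ((n+k-1).choose n)
      = ∑ l ∈ Finset.range (n+1), stirling1 n l *
          ((l.factorial : ℚ) * coeff (R := ℚ) l ((2 * (PowerSeries.exp ℚ + 1)⁻¹)^k)) := by
  have hEuler : ∀ l ∈ range (n+1),
      stirling1 n l * ((l.factorial : ℚ) * coeff (R := ℚ) l ((2 * (PowerSeries.exp ℚ + 1)⁻¹)^k))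
        = ∑ j ∈ range (n+1), gq k j * (stirling1 n l * ((l.factorial : ℚ) * coeff (R := ℚ) l (Aps ^ j))) := by
    intro l hl
    rw [mem_range] at hl
    rw [coeff_F k hk l, Finset.mul_sum, Finset.mul_sum]
    have hext : ∑ j ∈ range (l+1), stirling1 n l * ((l.factorial : ℚ) * (gq k j * coeff (R := ℚ) l (Aps ^ j)))
        = ∑ j ∈ range (n+1), stirling1 n l * ((l.factorial : ℚ) * (gq k j * coeff (R := ℚ) l (Aps ^ j))) :=
      Finset.sum_subset (Finset.range_subset_range.2 (by omega)) (fun j _ hj => by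
        simp only [Finset.mem_range, not_lt] at hj
        rw [coeff_A_pow (by omega)]
        simp)
    rw [hext]
    apply Finset.sum_congr rfl
    intro j _
    ring
  rw [Finset.sum_congr rfl hEuler, Finset.sum_comm]
  have hinner : ∀ j ∈ range (n+1),
      ∑ l ∈ range (n+1), gq k j * (stirling1 n l * ((l.factorial : ℚ) * coeff (R := ℚ) l (Aps ^ j)))
        = gq k j * (if j = n then (n.factorial : ℚ) else 0) := by
    intro j hj
    rw [mem_range] at hj
    rw [← Finset.mul_sum]
    congr 1
    rw [← stirlingOrth n j (by omega)]
    apply Finset.sum_congr rfl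
    intro l _
    rw [fact_coeff_A_pow]
  rw [Finset.sum_congr rfl hinner, Finset.sum_eq_single n]
  · rw [if_pos rfl, gq]
    ring
  · intro i hi hne
    rw [if_neg hne, mul_zero]
  · intro h
    exact absurd (mem_range.2 (by omega)) h

theorem changhee_eq_stirling1_euler (n : ℕ) (k : ℕ) (hk : 0 < k) :
    Ch k n = ∑ l ∈ Finset.range (n+1), stirling1 n l * EulerN k l := by
  simp only [Ch, EulerN]
  exact changhee_aux n k hk
end

section
/- For all nonnegative integers m, positive integers k, and x, E_m^{(k)}(x) = Σ_{n=0}^{m} Ch_n^{(k)}(x) S_2(m,n), where S_2 denotes Stirling numbers of the second kind. -/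
open PowerSeries Finset

/-- my substitution t ↦ e^t - 1 -/
noncomputable def mysub (h : PowerSeries ℚ) : PowerSeries ℚ :=
  PowerSeries.mk fun m => ∑ n ∈ range (m+1),
    PowerSeries.coeff (R := ℚ) n h * PowerSeries.coeff (R := ℚ) m ((PowerSeries.exp ℚ - 1)^n)

lemma coeff_expm1_pow {m n : ℕ} (h : m < n) :
    PowerSeries.coeff (R := ℚ) m ((PowerSeries.exp ℚ - 1)^n) = 0 := by
  have hX : (PowerSeries.X : ℚ⟦X⟧) ∣ (PowerSeries.exp ℚ - 1) := by
    rw [PowerSeries.X_dvd_iff]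
    simp [PowerSeries.constantCoeff_exp]
  exact (PowerSeries.X_pow_dvd_iff.mp (pow_dvd_pow_of_dvd hX n)) m h

lemma coeff_mysub {m M : ℕ} (hm : m ≤ M) (h : PowerSeries ℚ) :
    PowerSeries.coeff (R := ℚ) m (mysub h) = ∑ n ∈ range (M+1),
      PowerSeries.coeff (R := ℚ) n h * PowerSeries.coeff (R := ℚ) m ((PowerSeries.exp ℚ - 1)^n) := by
  rw [mysub, PowerSeries.coeff_mk]
  apply Finset.sum_subset (Finset.range_subset_range.mpr (by omega))
  intro n _ hn
  rw [coeff_expm1_pow (by simp at hn ⊢; omega), mul_zero]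

lemma coeff_mysub_eq_sum {m M : ℕ} (hm : m ≤ M) (h : PowerSeries ℚ) :
    PowerSeries.coeff (R := ℚ) m (mysub h) =
      PowerSeries.coeff (R := ℚ) m (∑ n ∈ range (M+1),
        PowerSeries.C (R := ℚ) (PowerSeries.coeff (R := ℚ) n h) * (PowerSeries.exp ℚ - 1)^n) := by
  rw [coeff_mysub hm, map_sum]
  simp [PowerSeries.coeff_C_mul]

lemma coeff_mul_left_congr {m : ℕ} {a b c : PowerSeries ℚ}
    (h : ∀ i ≤ m, PowerSeries.coeff (R := ℚ) i a = PowerSeries.coeff (R := ℚ) i b) :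
    PowerSeries.coeff (R := ℚ) m (c * a) = PowerSeries.coeff (R := ℚ) m (c * b) := by
  rw [PowerSeries.coeff_mul, PowerSeries.coeff_mul]
  refine Finset.sum_congr rfl fun p hp => ?_
  rw [Finset.HasAntidiagonal.mem_antidiagonal] at hp
  rw [h p.2 (by omega)]

lemma mysub_C_mul (a : ℚ) (f : PowerSeries ℚ) :
    mysub (PowerSeries.C (R := ℚ) a * f) = PowerSeries.C (R := ℚ) a * mysub f := by
  ext m
  rw [coeff_mysub (le_refl m), PowerSeries.coeff_C_mul, coeff_mysub (le_refl m),
    Finset.mul_sum]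
  refine Finset.sum_congr rfl fun n _ => ?_
  rw [PowerSeries.coeff_C_mul]; ring

lemma mysub_add (f g : PowerSeries ℚ) : mysub (f + g) = mysub f + mysub g := by
  ext m
  rw [map_add, coeff_mysub (le_refl m), coeff_mysub (le_refl m), coeff_mysub (le_refl m),
    ← Finset.sum_add_distrib]
  refine Finset.sum_congr rfl fun n _ => ?_
  rw [map_add]; ring

lemma mysub_X_mul (f : PowerSeries ℚ) :
    mysub (PowerSeries.X * f) = (PowerSeries.exp ℚ - 1) * mysub f := by
  ext m
  have hr : PowerSeries.coeff (R := ℚ) m ((PowerSeries.exp ℚ - 1) * mysub f)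
      = PowerSeries.coeff (R := ℚ) m ((PowerSeries.exp ℚ - 1) *
        ∑ n ∈ range (m+1), PowerSeries.C (R := ℚ) (PowerSeries.coeff (R := ℚ) n f)
          * (PowerSeries.exp ℚ - 1)^n) := by
    apply coeff_mul_left_congr
    intro i hi
    exact coeff_mysub_eq_sum hi f
  rw [hr, Finset.mul_sum]
  have : ∀ n, (PowerSeries.exp ℚ - 1) * (PowerSeries.C (R := ℚ) (PowerSeries.coeff (R := ℚ) n f)
      * (PowerSeries.exp ℚ - 1)^n)
      = PowerSeries.C (R := ℚ) (PowerSeries.coeff (R := ℚ) n f) * (PowerSeries.exp ℚ - 1)^(n+1) := by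
    intro n; ring
  simp_rw [this]
  rw [map_sum, coeff_mysub (le_refl m)]
  simp_rw [PowerSeries.coeff_C_mul]
  rw [Finset.sum_range_succ', Finset.sum_range_succ]
  simp_rw [PowerSeries.coeff_succ_X_mul]
  have h0 : PowerSeries.coeff (R := ℚ) 0 (PowerSeries.X * f) = 0 := by
    rw [PowerSeries.coeff_zero_eq_constantCoeff, map_mul]
    simp
  rw [h0, coeff_expm1_pow (Nat.lt_succ_self m)]
  ring

lemma gbinom_natCast_of_le {N n : ℕ} (h : n ≤ N) : gbinom (N : ℚ) n = N.choose n := by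
  have hprod : (∏ i ∈ range n, ((N : ℚ) - i)) = (N.descFactorial n : ℚ) := by
    rw [Nat.descFactorial_eq_prod_range, Nat.cast_prod]
    refine Finset.prod_congr rfl fun i hi => ?_
    rw [Nat.cast_sub (by simp at hi; omega)]
  rw [gbinom, hprod, Nat.descFactorial_eq_factorial_mul_choose]
  push_cast
  rw [mul_comm, mul_div_assoc, div_self (by positivity), mul_one]

lemma gbinom_natCast_of_lt {N n : ℕ} (h : N < n) : gbinom (N : ℚ) n = 0 := by
  rw [gbinom, Finset.prod_eq_zero (Finset.mem_range.mpr h) (by simp), zero_div]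

lemma key_nat (m N : ℕ) :
    ∑ n ∈ range (m+1), PowerSeries.coeff (R := ℚ) m ((PowerSeries.exp ℚ - 1)^n) * gbinom (N : ℚ) n
      = (N : ℚ)^m * (1/m.factorial) := by
  set M := max m N with hM
  have step1 : ∑ n ∈ range (m+1), PowerSeries.coeff (R := ℚ) m ((PowerSeries.exp ℚ - 1)^n) * gbinom (N : ℚ) n
      = ∑ n ∈ range (M+1), PowerSeries.coeff (R := ℚ) m ((PowerSeries.exp ℚ - 1)^n) * gbinom (N : ℚ) n := by
    apply Finset.sum_subset (Finset.range_subset_range.mpr (by omega))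
    intro n _ hn
    rw [coeff_expm1_pow (by simp at hn ⊢; omega), zero_mul]
  have step2 : (∑ n ∈ range (M+1), PowerSeries.C (R := ℚ) (gbinom (N:ℚ) n) * (PowerSeries.exp ℚ - 1)^n)
      = PowerSeries.exp ℚ ^ N := by
    have h1 : (∑ n ∈ range (M+1), PowerSeries.C (R := ℚ) (gbinom (N:ℚ) n) * (PowerSeries.exp ℚ - 1)^n)
        = ∑ n ∈ range (N+1), PowerSeries.C (R := ℚ) (gbinom (N:ℚ) n) * (PowerSeries.exp ℚ - 1)^n := by
      symm
      apply Finset.sum_subset (Finset.range_subset_range.mpr (by omega))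
      intro n _ hn
      rw [gbinom_natCast_of_lt (by simp at hn ⊢; omega), map_zero, zero_mul]
    rw [h1]
    have h2 : ∀ n ∈ range (N+1), PowerSeries.C (R := ℚ) (gbinom (N:ℚ) n) * (PowerSeries.exp ℚ - 1)^n
        = (PowerSeries.exp ℚ - 1)^n * 1^(N-n) * (N.choose n : ℚ⟦X⟧) := by
      intro n hn
      rw [gbinom_natCast_of_le (by simp at hn; omega)]
      rw [one_pow, mul_one]
      rw [mul_comm]
      norm_cast
    rw [Finset.sum_congr rfl h2, ← add_pow]
    ring_nf
  have step3 : PowerSeries.coeff (R := ℚ) m (PowerSeries.exp ℚ ^ N) = (N:ℚ)^m * (1/m.factorial) := by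
    rw [PowerSeries.exp_pow_eq_rescale_exp, PowerSeries.coeff_rescale, PowerSeries.coeff_exp]
    simp
  rw [step1, ← step3, ← step2, map_sum]
  refine Finset.sum_congr rfl fun n _ => ?_
  rw [PowerSeries.coeff_C_mul]; ring

lemma key_rat (m : ℕ) (x : ℚ) :
    ∑ n ∈ range (m+1), PowerSeries.coeff (R := ℚ) m ((PowerSeries.exp ℚ - 1)^n) * gbinom x n
      = x^m * (1/m.factorial) := by
  set Q : Polynomial ℚ :=
    (∑ n ∈ range (m+1), Polynomial.C (PowerSeries.coeff (R := ℚ) m ((PowerSeries.exp ℚ - 1)^n)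
        / n.factorial) * ∏ i ∈ range n, (Polynomial.X - Polynomial.C (i:ℚ)))
      - Polynomial.C ((1:ℚ)/m.factorial) * Polynomial.X^m with hQ
  have hevalQ : ∀ y : ℚ, Polynomial.eval y Q
      = ∑ n ∈ range (m+1), PowerSeries.coeff (R := ℚ) m ((PowerSeries.exp ℚ - 1)^n) * gbinom y n
        - y^m * (1/m.factorial) := by
    intro y
    rw [hQ]
    simp only [Polynomial.eval_sub, Polynomial.eval_finset_sum, Polynomial.eval_mul,
      Polynomial.eval_C, Polynomial.eval_pow, Polynomial.eval_X, Polynomial.eval_prod,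
      Polynomial.eval_sub]
    congr 1
    · refine Finset.sum_congr rfl fun n _ => ?_
      simp only [gbinom]
      field_simp
    · ring
  have hQ0 : Q = 0 := by
    apply Polynomial.eq_zero_of_infinite_isRoot
    apply Set.infinite_of_injective_forall_mem (f := fun N : ℕ => (N : ℚ))
      (Nat.cast_injective)
    intro N
    simp only [Set.mem_setOf_eq, Polynomial.IsRoot, hevalQ]
    rw [key_nat m N]
    ring
  have := hevalQ x
  rw [hQ0, Polynomial.eval_zero] at this
  linarith

lemma mysub_two_add_X_mul (f : PowerSeries ℚ) :
    mysub ((2 + PowerSeries.X) * f) = (PowerSeries.exp ℚ + 1) * mysub f := by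
  have h : (2 + PowerSeries.X) * f = PowerSeries.C (R := ℚ) 2 * f + PowerSeries.X * f := by
    rw [← two_eq_C]; ring
  rw [h, mysub_add, mysub_C_mul, mysub_X_mul, ← two_eq_C]
  ring

lemma mysub_two_add_X_pow_mul (k : ℕ) (f : PowerSeries ℚ) :
    mysub ((2 + PowerSeries.X)^k * f) = (PowerSeries.exp ℚ + 1)^k * mysub f := by
  induction k generalizing f with
  | zero => simp
  | succ k ih =>
    have h : (2 + PowerSeries.X)^(k+1) * f = (2 + PowerSeries.X)^k * ((2 + PowerSeries.X) * f) := by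
      ring
    rw [h, ih, mysub_two_add_X_mul]
    ring


lemma mysub_onePlusXPow (x : ℚ) :
    mysub (onePlusXPow x) = PowerSeries.rescale x (PowerSeries.exp ℚ) := by
  ext m
  rw [coeff_mysub (le_refl m), PowerSeries.coeff_rescale, PowerSeries.coeff_exp]
  simp only [onePlusXPow, PowerSeries.coeff_mk, Algebra.algebraMap_self, RingHom.id_apply]
  rw [← key_rat m x]
  · refine Finset.sum_congr rfl fun n _ => ?_
    ring

theorem euler_poly_eq_changhee_poly_stirling2 (m : ℕ) (k : ℕ) (hk : 0 < k) (x : ℚ) :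
    EulerP k x m = ∑ n ∈ Finset.range (m+1), ChP k x n * stirling2 m n := by
  have hc2X : PowerSeries.constantCoeff (R := ℚ) (2 + PowerSeries.X : ℚ⟦X⟧) = 2 := by
    rw [map_add, PowerSeries.constantCoeff_X, map_ofNat, add_zero]
  have hinv : (2 + PowerSeries.X : ℚ⟦X⟧) * (2 + PowerSeries.X)⁻¹ = 1 :=
    PowerSeries.mul_inv_cancel _ (by rw [hc2X]; norm_num)
  have hGrel : (2 + PowerSeries.X : ℚ⟦X⟧)^k
        * ((2 * (2 + PowerSeries.X : PowerSeries ℚ)⁻¹)^k * onePlusXPow x)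
      = 2^k * onePlusXPow x := by
    calc (2 + PowerSeries.X : ℚ⟦X⟧)^k
          * ((2 * (2 + PowerSeries.X : PowerSeries ℚ)⁻¹)^k * onePlusXPow x)
        = ((2 + PowerSeries.X) * (2 * (2 + PowerSeries.X : ℚ⟦X⟧)⁻¹))^k * onePlusXPow x := by
          rw [← mul_assoc, ← mul_pow]
      _ = ((2 + PowerSeries.X) * (2 + PowerSeries.X : ℚ⟦X⟧)⁻¹ * 2)^k * onePlusXPow x := by
          ring_nf
      _ = 2^k * onePlusXPow x := by rw [hinv, one_mul]
  have hsubG : (PowerSeries.exp ℚ + 1)^k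
        * mysub ((2 * (2 + PowerSeries.X : PowerSeries ℚ)⁻¹)^k * onePlusXPow x)
      = 2^k * PowerSeries.rescale x (PowerSeries.exp ℚ) := by
    rw [← mysub_two_add_X_pow_mul, hGrel]
    have h2 : (2:ℚ⟦X⟧)^k * onePlusXPow x = PowerSeries.C (R := ℚ) (2^k) * onePlusXPow x := by
      rw [map_pow, ← two_eq_C]
    rw [h2, mysub_C_mul, mysub_onePlusXPow, map_pow, ← two_eq_C]
  have hce : PowerSeries.constantCoeff (R := ℚ) (PowerSeries.exp ℚ + 1) = 2 := by
    rw [map_add, PowerSeries.constantCoeff_exp, map_one]; norm_num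
  have hinvE : (PowerSeries.exp ℚ + 1) * (PowerSeries.exp ℚ + 1)⁻¹ = 1 :=
    PowerSeries.mul_inv_cancel _ (by rw [hce]; norm_num)
  have hF : (PowerSeries.exp ℚ + 1)^k
        * ((2 * (PowerSeries.exp ℚ + 1)⁻¹)^k * PowerSeries.rescale x (PowerSeries.exp ℚ))
      = 2^k * PowerSeries.rescale x (PowerSeries.exp ℚ) := by
    calc (PowerSeries.exp ℚ + 1)^k
          * ((2 * (PowerSeries.exp ℚ + 1)⁻¹)^k * PowerSeries.rescale x (PowerSeries.exp ℚ))
        = ((PowerSeries.exp ℚ + 1) * (2 * (PowerSeries.exp ℚ + 1)⁻¹))^k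
            * PowerSeries.rescale x (PowerSeries.exp ℚ) := by rw [← mul_assoc, ← mul_pow]
      _ = ((PowerSeries.exp ℚ + 1) * (PowerSeries.exp ℚ + 1)⁻¹ * 2)^k
            * PowerSeries.rescale x (PowerSeries.exp ℚ) := by ring_nf
      _ = _ := by rw [hinvE, one_mul]
  have hne : ((PowerSeries.exp ℚ + 1)^k : ℚ⟦X⟧) ≠ 0 := by
    apply pow_ne_zero
    intro h
    rw [h, map_zero] at hce
    norm_num at hce
  have hmain : mysub ((2 * (2 + PowerSeries.X : PowerSeries ℚ)⁻¹)^k * onePlusXPow x)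
      = (2 * (PowerSeries.exp ℚ + 1)⁻¹)^k * PowerSeries.rescale x (PowerSeries.exp ℚ) :=
    mul_left_cancel₀ hne (by rw [hsubG, hF])
  simp only [EulerP, ChP, stirling2]
  rw [← hmain, coeff_mysub (le_refl m), Finset.mul_sum]
  refine Finset.sum_congr rfl fun n hn => ?_
  have hn0 : (n.factorial : ℚ) ≠ 0 := by positivity
  field_simp
end

section
/- For all nonnegative integers m, positive integers k, and x, E_m^{(k)}(x+k) = Σ_{n=0}^{m} Ĉh_n^{(k)}(x) S_2(m,n). -/
open PowerSeries Finset

noncomputable def qq : PowerSeries ℚ := PowerSeries.exp ℚ - 1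

lemma constantCoeff_qq : constantCoeff (R := ℚ) qq = 0 := by
  simp [qq, PowerSeries.constantCoeff_exp]

lemma X_dvd_qq : (X : PowerSeries ℚ) ∣ qq := X_dvd_iff.mpr constantCoeff_qq

lemma coeff_qq_pow_eq_zero {m n : ℕ} (h : m < n) : coeff (R := ℚ) m (qq ^ n) = 0 := by
  have hd : (X : PowerSeries ℚ) ^ n ∣ qq ^ n := pow_dvd_pow_of_dvd X_dvd_qq n
  exact (PowerSeries.X_pow_dvd_iff.mp hd) m h

noncomputable def ev (P : Polynomial ℚ) : PowerSeries ℚ := P.eval₂ (C (R := ℚ)) qq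

lemma ev_coeff_congr {P Q : Polynomial ℚ} {N m : ℕ} (hm : m < N)
    (h : ∀ i < N, P.coeff i = Q.coeff i) :
    coeff (R := ℚ) m (ev P) = coeff (R := ℚ) m (ev Q) := by
  have hdvd : (Polynomial.X : Polynomial ℚ) ^ N ∣ P - Q :=
    Polynomial.X_pow_dvd_iff.mpr (fun d hd => by simp [Polynomial.coeff_sub, h d hd])
  obtain ⟨R, hR⟩ := hdvd
  have hsub : ev P - ev Q = qq ^ N * ev R := by
    rw [ev, ev, ← Polynomial.eval₂_sub, hR, Polynomial.eval₂_mul, Polynomial.eval₂_X_pow]; rfl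
  have h0 : coeff (R := ℚ) m (qq ^ N * ev R) = 0 := by
    have hd : (X : PowerSeries ℚ) ^ N ∣ qq ^ N * ev R :=
      Dvd.dvd.mul_right (pow_dvd_pow_of_dvd X_dvd_qq N) _
    exact (PowerSeries.X_pow_dvd_iff.mp hd) m hm
  have h2 : coeff (R := ℚ) m (ev P - ev Q) = 0 := by rw [hsub]; exact h0
  rw [map_sub, sub_eq_zero] at h2
  exact h2

noncomputable def sigma (F : PowerSeries ℚ) : PowerSeries ℚ :=
  PowerSeries.mk fun m => coeff (R := ℚ) m (ev (trunc (m+1) F))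

lemma coeff_sigma (F : PowerSeries ℚ) (m : ℕ) :
    coeff (R := ℚ) m (sigma F) = ∑ n ∈ range (m+1), coeff (R := ℚ) n F * coeff (R := ℚ) m (qq ^ n) := by
  rw [sigma, coeff_mk, ev, eval₂_trunc_eq_sum_range, map_sum]
  exact Finset.sum_congr rfl fun n _ => by rw [coeff_C_mul]

lemma coeff_sigma_eq (F : PowerSeries ℚ) {m N : ℕ} (h : m < N) :
    coeff (R := ℚ) m (sigma F) = coeff (R := ℚ) m (ev (trunc N F)) := by
  rw [sigma, coeff_mk]
  apply ev_coeff_congr (Nat.lt_succ_self m)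
  intro i hi
  rw [PowerSeries.coeff_trunc, PowerSeries.coeff_trunc, if_pos hi,
    if_pos (lt_of_lt_of_le hi (Nat.succ_le_of_lt h))]

lemma sigma_one : sigma (1 : PowerSeries ℚ) = 1 := by
  ext m
  rw [sigma, coeff_mk, trunc_one, ev, Polynomial.eval₂_one]

lemma sigma_mul (F G : PowerSeries ℚ) : sigma (F * G) = sigma F * sigma G := by
  ext m
  rw [sigma, coeff_mk]
  have h1 : coeff (R := ℚ) m (ev (trunc (m+1) (F*G))) =
      coeff (R := ℚ) m (ev (trunc (m+1) F * trunc (m+1) G)) := by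
    apply ev_coeff_congr (Nat.lt_succ_self m)
    intro i hi
    rw [PowerSeries.coeff_trunc, if_pos hi, ← Polynomial.coeff_coe,
      Polynomial.coe_mul]
    exact PowerSeries.coeff_mul_eq_coeff_trunc_mul_trunc F G hi
  rw [h1, ev, Polynomial.eval₂_mul, PowerSeries.coeff_mul, PowerSeries.coeff_mul]
  apply Finset.sum_congr rfl
  intro p hp
  rw [HasAntidiagonal.mem_antidiagonal] at hp
  have hp1 : p.1 < m + 1 := Nat.lt_succ_of_le (le_of_add_le_left hp.le)
  have hp2 : p.2 < m + 1 := Nat.lt_succ_of_le (le_of_add_le_right hp.le)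
  rw [coeff_sigma_eq F hp1, coeff_sigma_eq G hp2]
  rfl

lemma sigma_pow (F : PowerSeries ℚ) (n : ℕ) : sigma (F ^ n) = sigma F ^ n := by
  induction n with
  | zero => simpa using sigma_one
  | succ n ih => rw [pow_succ, pow_succ, sigma_mul, ih]

lemma sigma_C (a : ℚ) : sigma (C (R := ℚ) a) = C (R := ℚ) a := by
  ext m
  rw [sigma, coeff_mk, trunc_C, ev, Polynomial.eval₂_C]

lemma sigma_onePlusXPow (y : ℚ) :
    sigma (onePlusXPow y) = rescale y (exp ℚ) := by
  ext m
  rw [coeff_sigma, coeff_rescale, PowerSeries.coeff_exp]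
  simp only [onePlusXPow, coeff_mk, gbinom]
  have key : ∀ y : ℚ, ∑ n ∈ range (m+1), (∏ i ∈ Finset.range n, (y - i)) / n.factorial * (coeff (R := ℚ) m (qq ^ n))
      = y ^ m * (1 / m.factorial) := by
    have hpoly :
        (∑ n ∈ range (m+1), Polynomial.C ((coeff (R := ℚ) m (qq ^ n)) / n.factorial) *
          ∏ i ∈ Finset.range n, (Polynomial.X - Polynomial.C (i : ℚ)))
        = Polynomial.C ((1 : ℚ) / m.factorial) * Polynomial.X ^ m := by
      apply Polynomial.eq_of_infinite_eval_eq
      apply Set.Infinite.mono (s := Set.range ((↑·) : ℕ → ℚ))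
      swap
      · exact Set.infinite_range_of_injective Nat.cast_injective
      rintro _ ⟨N, rfl⟩
      simp only [Set.mem_setOf_eq, Polynomial.eval_finset_sum, Polynomial.eval_mul,
        Polynomial.eval_C, Polynomial.eval_pow, Polynomial.eval_X, Polynomial.eval_prod,
        Polynomial.eval_sub]
      have hprod : ∀ n : ℕ, (∏ i ∈ Finset.range n, ((N : ℚ) - i)) = N.descFactorial n := by
        intro n
        induction n with
        | zero => simp
        | succ n ih =>
          rw [Finset.prod_range_succ, ih, Nat.descFactorial_succ, Nat.cast_mul]
          rcases le_or_gt n N with hle | hlt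
          · rw [Nat.cast_sub hle]; ring
          · rw [Nat.descFactorial_eq_zero_iff_lt.mpr hlt]; simp
      have hterm : ∀ n : ℕ, (coeff (R := ℚ) m (qq ^ n)) / n.factorial * (∏ i ∈ Finset.range n, ((N : ℚ) - i))
          = (coeff (R := ℚ) m (qq ^ n)) * N.choose n := by
        intro n
        rw [hprod n, Nat.descFactorial_eq_factorial_mul_choose, Nat.cast_mul]
        have : (n.factorial : ℚ) ≠ 0 := Nat.cast_ne_zero.mpr n.factorial_ne_zero
        field_simp
      rw [Finset.sum_congr rfl fun n _ => hterm n]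
      -- now: ∑ n ∈ range (m+1), (coeff (R := ℚ) m (qq ^ n)) * choose N n = N^m / m!
      have hbig : ∑ n ∈ range (m+1), (coeff (R := ℚ) m (qq ^ n)) * N.choose n
          = ∑ n ∈ range (max m N + 1), (coeff (R := ℚ) m (qq ^ n)) * N.choose n := by
        apply Finset.sum_subset
        · exact Finset.range_subset_range.mpr (by omega)
        · intro n _ hn
          rw [Finset.mem_range, not_lt] at hn
          rw [coeff_qq_pow_eq_zero (show m < n by omega)]
          ring
      have hbig2 : ∑ n ∈ range (N+1), (coeff (R := ℚ) m (qq ^ n)) * N.choose n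
          = ∑ n ∈ range (max m N + 1), (coeff (R := ℚ) m (qq ^ n)) * N.choose n := by
        apply Finset.sum_subset
        · exact Finset.range_subset_range.mpr (by omega)
        · intro n _ hn
          rw [Finset.mem_range, not_lt] at hn
          rw [Nat.choose_eq_zero_of_lt (by omega)]
          simp
      have hexp : (exp ℚ) ^ N = (qq + 1) ^ N := by
        rw [qq]; ring_nf
      have hcoeff : coeff (R := ℚ) m ((exp ℚ) ^ N) = (N : ℚ) ^ m * (1 / m.factorial) := by
        rw [exp_pow_eq_rescale_exp, coeff_rescale, PowerSeries.coeff_exp]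
        norm_num
      rw [hexp, add_pow] at hcoeff
      simp only [one_pow, mul_one] at hcoeff
      rw [map_sum] at hcoeff
      have : ∀ n ∈ range (N+1), coeff (R := ℚ) m (qq ^ n * (N.choose n : PowerSeries ℚ))
          = (coeff (R := ℚ) m (qq ^ n)) * N.choose n := by
        intro n _
        rw [← map_natCast (C (R := ℚ)) (N.choose n), mul_comm, coeff_C_mul]
        ring
      rw [Finset.sum_congr rfl this, hbig2] at hcoeff
      rw [hbig, hcoeff]
      ring
    intro z
    have h2 := congrArg (Polynomial.eval z) hpoly
    simp only [Polynomial.eval_finset_sum, Polynomial.eval_mul, Polynomial.eval_C,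
      Polynomial.eval_pow, Polynomial.eval_X, Polynomial.eval_prod, Polynomial.eval_sub] at h2
    calc ∑ n ∈ range (m+1), (∏ i ∈ Finset.range n, (z - i)) / n.factorial * (coeff (R := ℚ) m (qq ^ n))
        = ∑ n ∈ range (m+1), (coeff (R := ℚ) m (qq ^ n)) / n.factorial *
            ∏ i ∈ Finset.range n, (z - (i:ℚ)) := Finset.sum_congr rfl fun n _ => by ring
      _ = z ^ m * (1 / m.factorial) := by rw [h2]; ring
  rw [key y, Algebra.algebraMap_self_apply]

lemma sigma_add (F G : PowerSeries ℚ) : sigma (F + G) = sigma F + sigma G := by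
  ext m
  simp [coeff_sigma, add_mul, Finset.sum_add_distrib]

lemma sigma_X : sigma (X : PowerSeries ℚ) = qq := by
  ext m
  rw [coeff_sigma]
  have h : ∀ n ∈ range (m+1),
      coeff (R := ℚ) n (X : PowerSeries ℚ) * coeff (R := ℚ) m (qq ^ n)
        = if n = 1 then coeff (R := ℚ) m (qq ^ 1) else 0 := by
    intro n _
    rw [PowerSeries.coeff_X]
    split_ifs with hh
    · rw [hh]; ring
    · ring
  rw [Finset.sum_congr rfl h, Finset.sum_ite_eq' (range (m+1)) 1
    (fun _ => coeff (R := ℚ) m (qq ^ 1))]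
  rcases Nat.eq_zero_or_pos m with rfl | hm
  · simp [coeff_zero_eq_constantCoeff, constantCoeff_qq]
  · rw [if_pos (Finset.mem_range.mpr (by omega)), pow_one]

lemma sigma_two : sigma (2 : PowerSeries ℚ) = 2 := by
  have h := sigma_C 2
  rwa [show (C (R := ℚ)) (2 : ℚ) = (2 : PowerSeries ℚ) from map_ofNat (C (R := ℚ)) 2] at h

lemma sigma_two_add_X : sigma (2 + X : PowerSeries ℚ) = exp ℚ + 1 := by
  rw [sigma_add, sigma_two, sigma_X, qq]; ring

lemma sigma_inv : sigma ((2 + X : PowerSeries ℚ)⁻¹) = (exp ℚ + 1)⁻¹ := by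
  have hc : constantCoeff (R := ℚ) (2 + X) ≠ 0 := by
    rw [map_add, constantCoeff_X, add_zero,
      show ((2 : PowerSeries ℚ)) = C (R := ℚ) 2 from (map_ofNat (C (R := ℚ)) 2).symm, constantCoeff_C]
    norm_num
  have h1 : (2 + X : PowerSeries ℚ) * (2 + X)⁻¹ = 1 := PowerSeries.mul_inv_cancel _ hc
  have h2 : (exp ℚ + 1) * sigma ((2 + X : PowerSeries ℚ)⁻¹) = 1 := by
    rw [← sigma_two_add_X, ← sigma_mul, h1, sigma_one]
  have hc2 : constantCoeff (R := ℚ) (exp ℚ + 1) ≠ 0 := by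
    simp [PowerSeries.constantCoeff_exp]
  rw [PowerSeries.eq_inv_iff_mul_eq_one hc2, mul_comm]
  exact h2

lemma sigma_B (k : ℕ) (y : ℚ) :
    sigma ((2 * (2 + PowerSeries.X : PowerSeries ℚ)⁻¹)^k * onePlusXPow y)
      = (2 * (exp ℚ + 1)⁻¹)^k * rescale y (exp ℚ) := by
  rw [sigma_mul, sigma_pow, sigma_mul, sigma_two, sigma_inv, sigma_onePlusXPow]

theorem euler_shift_eq_changhee2_poly_stirling2 (m : ℕ) (k : ℕ) (hk : 0 < k) (x : ℚ) :
    EulerP k (x + k) m = ∑ n ∈ Finset.range (m+1), ChP2 k x n * stirling2 m n := by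
  rw [EulerP, ← sigma_B k (x + k), coeff_sigma, Finset.mul_sum]
  apply Finset.sum_congr rfl
  intro n _
  rw [ChP2, stirling2]
  have hq : (exp ℚ - 1 : PowerSeries ℚ) = qq := rfl
  rw [hq]
  have hfac : (n.factorial : ℚ) ≠ 0 := Nat.cast_ne_zero.mpr n.factorial_ne_zero
  field_simp
end
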